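/- Retraction stays near projection (consequence for Riemannian consensus): assume for a retraction R on M the estimate ‖P_M(x+u) − R_x(P_{T_xM}(u))‖ ≤ M₁‖u‖² for all x ∈ M and u ∈ ℝ^{d×r}, and assume P_M is R/(R−δ̂)-Lipschitz on the δ̂-tube with single-step contraction factor ρ₂ = R(1−γ+γσ₂)/(R−δ̂) + 8M₁γ²δ̂ < 1. Then the Riemannian gradient consensus iteration x_{i,k+1} = R_{x_{i,k}}(−γ P_{T_{x_{i,k}}M}(x_{i,k} − ∑_j W_{ij}x_{j,k})) satisfies ‖x_{k+1} − x̄_{k+1}‖ ≤ ρ₂‖x_k − x̄_k‖ whenever ‖x_k − x̄_k‖ ≤ δ̂ ≤ R/4. -/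

import Mathlib

open scoped RealInnerProductSpace


open scoped BigOperators

/-- Frobenius norm of a stacked family of vectors. -/
noncomputable def stackNorm {n N : ℕ} (z : Fin n → EuclideanSpace ℝ (Fin N)) : ℝ :=
  Real.sqrt (∑ i, ‖z i‖ ^ 2)


namespace Stmt19Aux

variable {n N : ℕ}

lemma stackNorm_nonneg (z : Fin n → EuclideanSpace ℝ (Fin N)) : 0 ≤ stackNorm z :=
  Real.sqrt_nonneg _

lemma sq_stackNorm (z : Fin n → EuclideanSpace ℝ (Fin N)) :
    stackNorm z ^ 2 = ∑ i, ‖z i‖ ^ 2 :=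
  Real.sq_sqrt (Finset.sum_nonneg fun i _ => by positivity)

lemma norm_le_stackNorm (z : Fin n → EuclideanSpace ℝ (Fin N)) (i : Fin n) :
    ‖z i‖ ≤ stackNorm z := by
  have h1 : ‖z i‖ ^ 2 ≤ ∑ j, ‖z j‖ ^ 2 :=
    Finset.single_le_sum (f := fun j => ‖z j‖ ^ 2) (fun j _ => by positivity)
      (Finset.mem_univ i)
  calc ‖z i‖ = Real.sqrt (‖z i‖ ^ 2) := (Real.sqrt_sq (norm_nonneg _)).symm
    _ ≤ _ := Real.sqrt_le_sqrt h1

lemma stackNorm_le_forall (z : Fin n → EuclideanSpace ℝ (Fin N)) (f : Fin n → ℝ)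
    (h : ∀ i, ‖z i‖ ≤ f i) : stackNorm z ≤ Real.sqrt (∑ i, f i ^ 2) :=
  Real.sqrt_le_sqrt (Finset.sum_le_sum fun i _ => pow_le_pow_left₀ (norm_nonneg _) (h i) 2)

lemma stackNorm_le_mul (c : ℝ) (hc : 0 ≤ c) (v w : Fin n → EuclideanSpace ℝ (Fin N))
    (h : ∀ i, ‖v i‖ ≤ c * ‖w i‖) : stackNorm v ≤ c * stackNorm w := by
  calc stackNorm v ≤ Real.sqrt (∑ i, (c * ‖w i‖) ^ 2) := stackNorm_le_forall v _ h
    _ = Real.sqrt (c ^ 2 * ∑ i, ‖w i‖ ^ 2) := by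
        rw [Finset.mul_sum]; congr 1; exact Finset.sum_congr rfl fun i _ => by ring
    _ = c * stackNorm w := by
        rw [Real.sqrt_mul (by positivity), Real.sqrt_sq hc]; rfl

lemma stackNorm_mono (v w : Fin n → EuclideanSpace ℝ (Fin N))
    (h : ∀ i, ‖v i‖ ≤ ‖w i‖) : stackNorm v ≤ stackNorm w := by
  simpa using stackNorm_le_mul 1 zero_le_one v w (by simpa using h)

lemma stackNorm_triangle (a b : Fin n → EuclideanSpace ℝ (Fin N)) :
    stackNorm (fun i => a i + b i) ≤ stackNorm a + stackNorm b := by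
  set F : EuclideanSpace ℝ (Fin n) := WithLp.toLp 2 (fun i => ‖a i‖) with hF
  set G : EuclideanSpace ℝ (Fin n) := WithLp.toLp 2 (fun i => ‖b i‖) with hG
  have hnF : ‖F‖ = stackNorm a := by
    rw [EuclideanSpace.norm_eq]; unfold stackNorm; congr 1
    exact Finset.sum_congr rfl fun i _ => by simp [hF]
  have hnG : ‖G‖ = stackNorm b := by
    rw [EuclideanSpace.norm_eq]; unfold stackNorm; congr 1
    exact Finset.sum_congr rfl fun i _ => by simp [hG]
  have h1 : stackNorm (fun i => a i + b i) ≤ Real.sqrt (∑ i, (F i + G i) ^ 2) :=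
    stackNorm_le_forall _ _ fun i => norm_add_le _ _
  have h2 : Real.sqrt (∑ i, (F i + G i) ^ 2) = ‖F + G‖ := by
    rw [EuclideanSpace.norm_eq]; congr 1
    exact Finset.sum_congr rfl fun i _ => by simp [Real.norm_eq_abs, sq_abs]
  calc stackNorm (fun i => a i + b i) ≤ ‖F + G‖ := h2 ▸ h1
    _ ≤ ‖F‖ + ‖G‖ := norm_add_le _ _
    _ = stackNorm a + stackNorm b := by rw [hnF, hnG]

lemma stackNorm_le_sum (v : Fin n → EuclideanSpace ℝ (Fin N)) :
    stackNorm v ≤ ∑ i, ‖v i‖ := by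
  have h : ∑ i, ‖v i‖ ^ 2 ≤ (∑ i, ‖v i‖) ^ 2 := by
    calc ∑ i, ‖v i‖ ^ 2 ≤ ∑ i, ‖v i‖ * (∑ j, ‖v j‖) :=
          Finset.sum_le_sum fun i _ => by
            rw [sq]
            exact mul_le_mul_of_nonneg_left
              (Finset.single_le_sum (fun j _ => norm_nonneg _) (Finset.mem_univ i))
              (norm_nonneg _)
      _ = (∑ i, ‖v i‖) ^ 2 := by rw [← Finset.sum_mul, sq]
  calc stackNorm v ≤ Real.sqrt ((∑ i, ‖v i‖) ^ 2) := Real.sqrt_le_sqrt h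
    _ = _ := Real.sqrt_sq (Finset.sum_nonneg fun i _ => norm_nonneg _)

lemma mean_sub (hn : 0 < n) (a : Fin n → EuclideanSpace ℝ (Fin N))
    (c : EuclideanSpace ℝ (Fin N)) :
    (n : ℝ)⁻¹ • (∑ j, a j) - c = (n : ℝ)⁻¹ • ∑ j, (a j - c) := by
  have hn' : (n : ℝ) ≠ 0 := Nat.cast_ne_zero.mpr hn.ne'
  rw [Finset.sum_sub_distrib, smul_sub]
  congr 1
  rw [Finset.sum_const, Finset.card_univ, Fintype.card_fin,
    ← Nat.cast_smul_eq_nsmul ℝ, smul_smul, inv_mul_cancel₀ hn', one_smul]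

lemma mean_close (hn : 0 < n) (a : Fin n → EuclideanSpace ℝ (Fin N))
    (c : EuclideanSpace ℝ (Fin N)) (r : ℝ) (h : ∀ i, ‖a i - c‖ ≤ r) :
    ‖(n : ℝ)⁻¹ • (∑ j, a j) - c‖ ≤ r := by
  have hn' : (0 : ℝ) < n := by exact_mod_cast hn
  rw [mean_sub hn]
  calc ‖(n : ℝ)⁻¹ • ∑ j, (a j - c)‖ = (n : ℝ)⁻¹ * ‖∑ j, (a j - c)‖ := by
        rw [norm_smul, Real.norm_eq_abs, abs_of_nonneg (by positivity)]
    _ ≤ (n : ℝ)⁻¹ * ∑ j, ‖a j - c‖ := by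
        gcongr; exact norm_sum_le _ _
    _ ≤ (n : ℝ)⁻¹ * ∑ _j : Fin n, r := by
        gcongr with j; exact h j
    _ = r := by
        rw [Finset.sum_const, Finset.card_univ, Fintype.card_fin, nsmul_eq_mul]
        field_simp

lemma sum_sq_sub_eq (hn : 0 < n) (a : Fin n → EuclideanSpace ℝ (Fin N))
    (c : EuclideanSpace ℝ (Fin N)) :
    ∑ i, ‖a i - c‖ ^ 2
      = (∑ i, ‖a i - (n : ℝ)⁻¹ • ∑ j, a j‖ ^ 2)
        + n * ‖(n : ℝ)⁻¹ • (∑ j, a j) - c‖ ^ 2 := by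
  have hn' : (n : ℝ) ≠ 0 := Nat.cast_ne_zero.mpr hn.ne'
  set μ : EuclideanSpace ℝ (Fin N) := (n : ℝ)⁻¹ • ∑ j, a j with hμdef
  have hμ : ∑ i, (a i - μ) = 0 := by
    rw [Finset.sum_sub_distrib, Finset.sum_const, Finset.card_univ, Fintype.card_fin,
      ← Nat.cast_smul_eq_nsmul ℝ, hμdef, smul_smul, mul_inv_cancel₀ hn', one_smul, sub_self]
  have key : ∀ i : Fin n, ‖a i - c‖ ^ 2
      = ‖a i - μ‖ ^ 2 + 2 * ⟪a i - μ, μ - c⟫ + ‖μ - c‖ ^ 2 := fun i => by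
    have h : a i - c = (a i - μ) + (μ - c) := by abel
    rw [h, norm_add_sq_real]
  calc ∑ i, ‖a i - c‖ ^ 2
      = ∑ i, (‖a i - μ‖ ^ 2 + 2 * ⟪a i - μ, μ - c⟫ + ‖μ - c‖ ^ 2) :=
        Finset.sum_congr rfl fun i _ => key i
    _ = (∑ i, ‖a i - μ‖ ^ 2) + (∑ i, 2 * ⟪a i - μ, μ - c⟫) + ∑ _i : Fin n, ‖μ - c‖ ^ 2 := by
        rw [Finset.sum_add_distrib, Finset.sum_add_distrib]
    _ = (∑ i, ‖a i - μ‖ ^ 2) + n * ‖μ - c‖ ^ 2 := by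
        have h2 : ∑ i, 2 * ⟪a i - μ, μ - c⟫ = 0 := by
          rw [← Finset.mul_sum, ← sum_inner, hμ, inner_zero_left, mul_zero]
        rw [h2, add_zero, Finset.sum_const, Finset.card_univ, Fintype.card_fin, nsmul_eq_mul]

lemma stackNorm_sub_le_of_close (hn : 0 < n) (a : Fin n → EuclideanSpace ℝ (Fin N))
    (c₁ c₂ : EuclideanSpace ℝ (Fin N))
    (h : ‖(n : ℝ)⁻¹ • (∑ j, a j) - c₁‖ ≤ ‖(n : ℝ)⁻¹ • (∑ j, a j) - c₂‖) :
    stackNorm (fun i => a i - c₁) ≤ stackNorm (fun i => a i - c₂) := by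
  apply Real.sqrt_le_sqrt
  rw [show (∑ i, ‖a i - c₁‖ ^ 2) = _ from sum_sq_sub_eq hn a c₁,
    show (∑ i, ‖a i - c₂‖ ^ 2) = _ from sum_sq_sub_eq hn a c₂]
  apply add_le_add le_rfl
  exact mul_le_mul_of_nonneg_left (pow_le_pow_left₀ (norm_nonneg _) h 2)
    (Nat.cast_nonneg n)

lemma stackNorm_sub_mean_le (hn : 0 < n) (a : Fin n → EuclideanSpace ℝ (Fin N))
    (c : EuclideanSpace ℝ (Fin N)) :
    stackNorm (fun i => a i - (n : ℝ)⁻¹ • ∑ j, a j) ≤ stackNorm (fun i => a i - c) := by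
  apply Real.sqrt_le_sqrt
  rw [show (∑ i, ‖a i - c‖ ^ 2) = _ from sum_sq_sub_eq hn a c]
  nlinarith [sq_nonneg ‖(n : ℝ)⁻¹ • (∑ j, a j) - c‖, Nat.cast_nonneg (α := ℝ) n]

end Stmt19Aux

open Stmt19Aux

set_option maxHeartbeats 1000000

/-- retraction stays near projection: Riemannian consensus contraction:
assume for a retraction `Retr` on `M` the estimate
`‖P(x+u) - Retr_x(P_{T_xM} u)‖ ≤ M₁ ‖u‖²` for all `x ∈ M`, `u`, and assume `P` is
`R/(R-δ̂)`-Lipschitz on the `δ̂`-tube, with single-step contraction factor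
`ρ₂ = R(1-γ+γσ₂)/(R-δ̂) + 8 M₁ γ² δ̂ < 1`. Then the Riemannian gradient consensus
iteration `x_i⁺ = Retr_{x_i}(-γ P_{T_{x_i}M}(x_i - ∑_j W_{ij} x_j))` satisfies
`‖x⁺ - x̄⁺‖ ≤ ρ₂ ‖x - x̄‖` whenever `‖x - x̄‖ ≤ δ̂ ≤ R/4`. -/
theorem stmt19 {n N : ℕ} (hn : 0 < n)
    (M : Set (EuclideanSpace ℝ (Fin N))) (hMcompact : IsCompact M) (hMne : M.Nonempty)
    (R : ℝ) (hR : 0 < R)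
    (P : EuclideanSpace ℝ (Fin N) → EuclideanSpace ℝ (Fin N))
    (hP : ∀ z, Metric.infDist z M < R →
      P z ∈ M ∧ dist (P z) z = Metric.infDist z M ∧
        ∀ y ∈ M, dist y z = Metric.infDist z M → y = P z)
    -- retraction and tangent-space projections
    (Retr : EuclideanSpace ℝ (Fin N) → EuclideanSpace ℝ (Fin N) → EuclideanSpace ℝ (Fin N))
    (Pt : EuclideanSpace ℝ (Fin N) →
      (EuclideanSpace ℝ (Fin N) →ₗ[ℝ] EuclideanSpace ℝ (Fin N)))
    (hRetrM : ∀ z ∈ M, ∀ u, Retr z u ∈ M)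
    (M₁ : ℝ) (hM₁0 : 0 ≤ M₁)
    (hM₁ : ∀ z ∈ M, ∀ u, ‖P (z + u) - Retr z (Pt z u)‖ ≤ M₁ * ‖u‖ ^ 2)
    (W : Matrix (Fin n) (Fin n) ℝ) (hsymm : W.IsSymm) (hnn : ∀ i j, 0 ≤ W i j)
    (hrow : ∀ i, ∑ j, W i j = 1)
    (σ₂ : ℝ) (hσ₂0 : 0 ≤ σ₂) (hσ₂1 : σ₂ < 1)
    (hσ : ∀ z : Fin n → EuclideanSpace ℝ (Fin N), (∑ i, z i = 0) →
      stackNorm (fun i => ∑ j, W i j • z j) ≤ σ₂ * stackNorm z)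
    (γ : ℝ) (hγ0 : 0 < γ) (hγ1 : γ ≤ 1)
    (δhat : ℝ) (hδ0 : 0 < δhat) (hδR : δhat ≤ R / 4)
    -- P is R/(R-δ̂)-Lipschitz on the δ̂-tube
    (hlip : ∀ a b, Metric.infDist a M ≤ δhat → Metric.infDist b M ≤ δhat →
      ‖P a - P b‖ ≤ (R / (R - δhat)) * ‖a - b‖)
    (hρ₂ : R * (1 - γ + γ * σ₂) / (R - δhat) + 8 * M₁ * γ ^ 2 * δhat < 1)
    (x : Fin n → EuclideanSpace ℝ (Fin N)) (hxM : ∀ i, x i ∈ M)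
    (hclose : stackNorm (fun i => x i - P ((n : ℝ)⁻¹ • ∑ j, x j)) ≤ δhat)
    (xnext : Fin n → EuclideanSpace ℝ (Fin N))
    (hnext : ∀ i, xnext i = Retr (x i) (Pt (x i) (-(γ • (x i - ∑ j, W i j • x j))))) :
    stackNorm (fun i => xnext i - P ((n : ℝ)⁻¹ • ∑ j, xnext j)) ≤
      (R * (1 - γ + γ * σ₂) / (R - δhat) + 8 * M₁ * γ ^ 2 * δhat) *
        stackNorm (fun i => x i - P ((n : ℝ)⁻¹ • ∑ j, x j)) := by
  have hnR : (0:ℝ) < n := by exact_mod_cast hn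
  have hn' : (n:ℝ) ≠ 0 := ne_of_gt hnR
  have hRδ : 0 < R - δhat := by linarith
  set L : ℝ := R / (R - δhat) with hLdef
  have hL0 : 0 ≤ L := by positivity
  set σt : ℝ := 1 - γ + γ * σ₂ with hσtdef
  have hσt0 : 0 ≤ σt := by nlinarith
  set xh : EuclideanSpace ℝ (Fin N) := (n : ℝ)⁻¹ • ∑ j, x j with hxhdef
  set xb : EuclideanSpace ℝ (Fin N) := P xh with hxbdef
  set d : ℝ := stackNorm (fun i => x i - xb) with hddef
  have hd0 : 0 ≤ d := stackNorm_nonneg _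
  have hdδ : d ≤ δhat := hclose
  have hcompx : ∀ i, ‖x i - xb‖ ≤ δhat := fun i =>
    le_trans (norm_le_stackNorm (fun j => x j - xb) i) hdδ
  have hmeanb : ‖xh - xb‖ ≤ δhat := mean_close hn x xb δhat hcompx
  -- xb ∈ M
  have hxh_lt : Metric.infDist xh M < R := by
    have h1 : Metric.infDist xh M ≤ dist xh (x ⟨0, hn⟩) :=
      Metric.infDist_le_dist_of_mem (hxM _)
    have h2 : dist xh (x ⟨0, hn⟩) ≤ 2 * δhat := by
      rw [dist_eq_norm]
      have hsplit : xh - x ⟨0, hn⟩ = (xh - xb) - (x ⟨0, hn⟩ - xb) := by abel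
      calc ‖xh - x ⟨0, hn⟩‖ ≤ ‖xh - xb‖ + ‖x ⟨0, hn⟩ - xb‖ := by
            rw [hsplit]; exact norm_sub_le _ _
        _ ≤ δhat + δhat := add_le_add hmeanb (hcompx _)
        _ = 2 * δhat := by ring
    linarith
  obtain ⟨hxbM, hxbdist, -⟩ := hP xh hxh_lt
  have hxhT : Metric.infDist xh M ≤ δhat :=
    le_trans (Metric.infDist_le_dist_of_mem hxbM) (by rw [dist_eq_norm]; exact hmeanb)
  -- centered family
  set z : Fin n → EuclideanSpace ℝ (Fin N) := fun i => x i - xh with hzdef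
  set e : ℝ := stackNorm z with hedef
  have he0 : 0 ≤ e := stackNorm_nonneg _
  have hzsum : ∑ i, z i = 0 := by
    simp only [hzdef]
    rw [Finset.sum_sub_distrib, Finset.sum_const, Finset.card_univ, Fintype.card_fin,
      ← Nat.cast_smul_eq_nsmul ℝ, hxhdef, smul_smul, mul_inv_cancel₀ hn', one_smul, sub_self]
  have he_le_d : e ≤ d := stackNorm_sub_mean_le hn x xb
  have hWz : ∀ i, ∑ j, W i j • z j = (∑ j, W i j • x j) - xh := by
    intro i
    simp only [hzdef, smul_sub]
    rw [Finset.sum_sub_distrib, ← Finset.sum_smul, hrow i, one_smul]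
  have hWzn : stackNorm (fun i => ∑ j, W i j • z j) ≤ σ₂ * e := hσ z hzsum
  -- the update directions
  set u : Fin n → EuclideanSpace ℝ (Fin N) :=
    fun i => -(γ • (x i - ∑ j, W i j • x j)) with hudef
  set y : Fin n → EuclideanSpace ℝ (Fin N) := fun i => x i + u i with hydef
  have hxz : ∀ i, x i - ∑ j, W i j • x j = z i - ∑ j, W i j • z j := by
    intro i; rw [hWz i]; simp only [hzdef]; abel
  have hunorm : ∀ i, ‖u i‖ = γ * ‖z i - ∑ j, W i j • z j‖ := by
    intro i
    show ‖-(γ • (x i - ∑ j, W i j • x j))‖ = _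
    rw [norm_neg, norm_smul, hxz i, Real.norm_eq_abs, abs_of_pos hγ0]
  have hzWz0 : 0 ≤ stackNorm (fun i => z i - ∑ j, W i j • z j) := stackNorm_nonneg _
  have hzWzn : stackNorm (fun i => z i - ∑ j, W i j • z j) ≤ 2 * e := by
    have t := stackNorm_triangle z (fun i => -(∑ j, W i j • z j))
    have h2 : stackNorm (fun i => -(∑ j, W i j • z j))
        = stackNorm (fun i => ∑ j, W i j • z j) := by
      unfold stackNorm; congr 1
      exact Finset.sum_congr rfl fun i _ => by rw [norm_neg]
    have heq : (fun i => z i + -(∑ j, W i j • z j))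
        = fun i => z i - ∑ j, W i j • z j := by
      funext i; abel
    rw [heq, h2] at t
    have hσe : σ₂ * e ≤ e := by
      nlinarith [he0, hσ₂1.le]
    have : stackNorm (fun i => z i - ∑ j, W i j • z j) ≤ e + σ₂ * e := by
      refine le_trans t ?_
      exact add_le_add le_rfl hWzn
    linarith
  have hsumu : ∑ i, ‖u i‖ ^ 2 ≤ 4 * γ ^ 2 * e ^ 2 := by
    have heq : ∑ i, ‖u i‖ ^ 2
        = γ ^ 2 * stackNorm (fun i => z i - ∑ j, W i j • z j) ^ 2 := by
      rw [sq_stackNorm, Finset.mul_sum]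
      exact Finset.sum_congr rfl fun i _ => by rw [hunorm i]; ring
    rw [heq]
    have hmul := mul_le_mul hzWzn hzWzn hzWz0 (by linarith : (0:ℝ) ≤ 2 * e)
    have hs2 : stackNorm (fun i => z i - ∑ j, W i j • z j) ^ 2 ≤ 4 * e ^ 2 := by
      calc stackNorm (fun i => z i - ∑ j, W i j • z j) ^ 2
          = stackNorm (fun i => z i - ∑ j, W i j • z j)
            * stackNorm (fun i => z i - ∑ j, W i j • z j) := sq _
        _ ≤ (2 * e) * (2 * e) := hmul
        _ = 4 * e ^ 2 := by ring
    calc γ ^ 2 * stackNorm (fun i => z i - ∑ j, W i j • z j) ^ 2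
        ≤ γ ^ 2 * (4 * e ^ 2) := mul_le_mul_of_nonneg_left hs2 (sq_nonneg γ)
      _ = 4 * γ ^ 2 * e ^ 2 := by ring
  -- retraction vs projection
  have hM1i : ∀ i, ‖xnext i - P (y i)‖ ≤ M₁ * ‖u i‖ ^ 2 := by
    intro i
    have h := hM₁ (x i) (hxM i) (u i)
    rw [hnext i, norm_sub_rev]
    simp only [hydef, hudef]
    simpa only [hudef] using h
  have hA : stackNorm (fun i => xnext i - P (y i)) ≤ 4 * M₁ * γ ^ 2 * e ^ 2 := by
    calc stackNorm (fun i => xnext i - P (y i)) ≤ ∑ i, ‖xnext i - P (y i)‖ :=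
          stackNorm_le_sum _
      _ ≤ ∑ i, M₁ * ‖u i‖ ^ 2 := Finset.sum_le_sum fun i _ => hM1i i
      _ = M₁ * ∑ i, ‖u i‖ ^ 2 := by rw [Finset.mul_sum]
      _ ≤ M₁ * (4 * γ ^ 2 * e ^ 2) := mul_le_mul_of_nonneg_left hsumu hM₁0
      _ = 4 * M₁ * γ ^ 2 * e ^ 2 := by ring
  -- y stays in the tube
  have hWb : ∀ i, (∑ j, W i j • x j) - xb = ∑ j, W i j • (x j - xb) := by
    intro i
    simp only [smul_sub]
    rw [Finset.sum_sub_distrib, ← Finset.sum_smul, hrow i, one_smul]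
  have hWxb : ∀ i, ‖(∑ j, W i j • x j) - xb‖ ≤ δhat := by
    intro i
    rw [hWb i]
    calc ‖∑ j, W i j • (x j - xb)‖ ≤ ∑ j, ‖W i j • (x j - xb)‖ := norm_sum_le _ _
      _ ≤ ∑ j, W i j * δhat := Finset.sum_le_sum fun j _ => by
          rw [norm_smul, Real.norm_eq_abs, abs_of_nonneg (hnn i j)]
          exact mul_le_mul_of_nonneg_left (hcompx j) (hnn i j)
      _ = δhat := by rw [← Finset.sum_mul, hrow i, one_mul]
  have hyb : ∀ i, ‖y i - xb‖ ≤ δhat := by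
    intro i
    have hdecomp : y i - xb
        = (1 - γ) • (x i - xb) + γ • ((∑ j, W i j • x j) - xb) := by
      simp only [hydef, hudef]
      module
    rw [hdecomp]
    calc ‖(1 - γ) • (x i - xb) + γ • ((∑ j, W i j • x j) - xb)‖
        ≤ ‖(1 - γ) • (x i - xb)‖ + ‖γ • ((∑ j, W i j • x j) - xb)‖ := norm_add_le _ _
      _ ≤ (1 - γ) * δhat + γ * δhat := by
          rw [norm_smul, norm_smul, Real.norm_eq_abs, Real.norm_eq_abs,
            abs_of_nonneg (by linarith : (0:ℝ) ≤ 1 - γ), abs_of_pos hγ0]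
          exact add_le_add (mul_le_mul_of_nonneg_left (hcompx i) (by linarith))
            (mul_le_mul_of_nonneg_left (hWxb i) hγ0.le)
      _ = δhat := by ring
  have hyT : ∀ i, Metric.infDist (y i) M ≤ δhat := fun i =>
    le_trans (Metric.infDist_le_dist_of_mem hxbM) (by rw [dist_eq_norm]; exact hyb i)
  -- consensus contraction for y around xh
  have hyxh : ∀ i, y i - xh = (1 - γ) • z i + γ • (∑ j, W i j • z j) := by
    intro i
    rw [hWz i]
    simp only [hydef, hudef, hzdef]
    module
  have hyn : stackNorm (fun i => y i - xh) ≤ σt * e := by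
    have t := stackNorm_triangle (fun i => (1 - γ) • z i)
      (fun i => γ • (∑ j, W i j • z j))
    have h1 : stackNorm (fun i => (1 - γ) • z i) ≤ (1 - γ) * e :=
      stackNorm_le_mul (1 - γ) (by linarith) _ z fun i => le_of_eq (by
        rw [norm_smul, Real.norm_eq_abs, abs_of_nonneg (by linarith : (0:ℝ) ≤ 1 - γ)])
    have h2 : stackNorm (fun i => γ • (∑ j, W i j • z j)) ≤ γ * (σ₂ * e) := by
      refine le_trans (stackNorm_le_mul γ hγ0.le _ (fun i => ∑ j, W i j • z j)
        (fun i => le_of_eq (by rw [norm_smul, Real.norm_eq_abs, abs_of_pos hγ0]))) ?_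
      exact mul_le_mul_of_nonneg_left hWzn hγ0.le
    have heq : (fun i => y i - xh)
        = fun i => (1 - γ) • z i + γ • (∑ j, W i j • z j) := funext hyxh
    rw [heq]
    calc stackNorm (fun i => (1 - γ) • z i + γ • (∑ j, W i j • z j))
        ≤ (1 - γ) * e + γ * (σ₂ * e) := le_trans t (add_le_add h1 h2)
      _ = σt * e := by rw [hσtdef]; ring
  -- Lipschitz projection step
  have hPyb : stackNorm (fun i => P (y i) - xb) ≤ L * (σt * e) := by
    have h : ∀ i, ‖P (y i) - xb‖ ≤ L * ‖y i - xh‖ := fun i =>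
      hlip (y i) xh (hyT i) hxhT
    calc stackNorm (fun i => P (y i) - xb)
        ≤ L * stackNorm (fun i => y i - xh) := stackNorm_le_mul L hL0 _ _ h
      _ ≤ L * (σt * e) := mul_le_mul_of_nonneg_left hyn hL0
  -- one-step bound against the OLD projected mean
  have hS : stackNorm (fun i => xnext i - xb)
      ≤ L * σt * e + 4 * M₁ * γ ^ 2 * e ^ 2 := by
    have t := stackNorm_triangle (fun i => xnext i - P (y i)) (fun i => P (y i) - xb)
    have heq : (fun i => (xnext i - P (y i)) + (P (y i) - xb))
        = fun i => xnext i - xb := by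
      funext i; abel
    rw [heq] at t
    have := add_le_add hA hPyb
    calc stackNorm (fun i => xnext i - xb)
        ≤ (4 * M₁ * γ ^ 2 * e ^ 2) + L * (σt * e) := le_trans t this
      _ = L * σt * e + 4 * M₁ * γ ^ 2 * e ^ 2 := by ring
  set ρ : ℝ := R * (1 - γ + γ * σ₂) / (R - δhat) + 8 * M₁ * γ ^ 2 * δhat with hρdef
  have hρeq : ρ = L * σt + 8 * M₁ * γ ^ 2 * δhat := by
    rw [hρdef, hLdef, hσtdef]; ring
  have hSd : stackNorm (fun i => xnext i - xb) ≤ ρ * d := by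
    rw [hρeq]
    have h1 : L * σt * e ≤ L * σt * d :=
      mul_le_mul_of_nonneg_left he_le_d (by positivity)
    have h2 : 4 * M₁ * γ ^ 2 * e ^ 2 ≤ 8 * M₁ * γ ^ 2 * δhat * d := by
      have hee : e * e ≤ d * d := mul_le_mul he_le_d he_le_d he0 hd0
      have hdd : d * d ≤ δhat * d := mul_le_mul_of_nonneg_right hdδ hd0
      have hMγ : 0 ≤ 4 * M₁ * γ ^ 2 := by positivity
      have h3 : e ^ 2 ≤ δhat * d := by
        calc e ^ 2 = e * e := sq e
          _ ≤ δhat * d := le_trans hee hdd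
      calc 4 * M₁ * γ ^ 2 * e ^ 2 ≤ 4 * M₁ * γ ^ 2 * (δhat * d) :=
            mul_le_mul_of_nonneg_left h3 hMγ
        _ ≤ 8 * M₁ * γ ^ 2 * δhat * d := by nlinarith [mul_nonneg (mul_nonneg hM₁0 (sq_nonneg γ)) (mul_nonneg hδ0.le hd0)]
    calc stackNorm (fun i => xnext i - xb) ≤ L * σt * e + 4 * M₁ * γ ^ 2 * e ^ 2 := hS
      _ ≤ L * σt * d + 8 * M₁ * γ ^ 2 * δhat * d := add_le_add h1 h2
      _ = (L * σt + 8 * M₁ * γ ^ 2 * δhat) * d := by ring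
  have hSδ : stackNorm (fun i => xnext i - xb) ≤ δhat := by
    have : ρ * d ≤ 1 * d := mul_le_mul_of_nonneg_right hρ₂.le hd0
    rw [one_mul] at this
    exact le_trans hSd (le_trans this hdδ)
  have hcompn : ∀ i, ‖xnext i - xb‖ ≤ δhat := fun i =>
    le_trans (norm_le_stackNorm (fun j => xnext j - xb) i) hSδ
  -- the new projected mean
  set xh' : EuclideanSpace ℝ (Fin N) := (n : ℝ)⁻¹ • ∑ j, xnext j with hxh'def
  have hxh'b : ‖xh' - xb‖ ≤ δhat := mean_close hn xnext xb δhat hcompn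
  have hxh'lt : Metric.infDist xh' M < R := by
    have := le_trans (Metric.infDist_le_dist_of_mem hxbM)
      (by rw [dist_eq_norm]; exact hxh'b : dist xh' xb ≤ δhat)
    linarith
  obtain ⟨hxbM', hdist', -⟩ := hP xh' hxh'lt
  have hfin : stackNorm (fun i => xnext i - P xh')
      ≤ stackNorm (fun i => xnext i - xb) := by
    apply stackNorm_sub_le_of_close hn xnext (P xh') xb
    show ‖xh' - P xh'‖ ≤ ‖xh' - xb‖
    have h1 : ‖xh' - P xh'‖ = Metric.infDist xh' M := by
      rw [← hdist', dist_eq_norm, norm_sub_rev]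
    have h2 : Metric.infDist xh' M ≤ ‖xh' - xb‖ := by
      refine le_trans (Metric.infDist_le_dist_of_mem hxbM) ?_
      rw [dist_eq_norm]
    rw [h1]; exact h2
  exact le_trans hfin hSd
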